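/- Let m, n be positive integers and define f : ℝ² → ℝ by f(x,y) := x^m + y^n. Then f does not have a saddle point at (0,0). -/

import Mathlib

open Set Filter Topology

/-- `γ : [a, b] → D` is a regular path in `D`: it is continuous on `[a, b]`, maps `[a, b]`
into `D`, is differentiable on `(a, b)`, and its derivative is nonvanishing on `(a, b)`. -/
def IsRegularPath (D : Set (ℝ × ℝ)) (γ : ℝ → ℝ × ℝ) (a b : ℝ) : Prop :=
  a < b ∧ ContinuousOn γ (Set.Icc a b) ∧ Set.MapsTo γ (Set.Icc a b) D ∧
    ∀ t ∈ Set.Ioo a b, DifferentiableAt ℝ γ t ∧ deriv γ t ≠ 0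

/-- A function of one real variable has a strict local maximum at `t`. -/
def IsStrictLocalMax (g : ℝ → ℝ) (t : ℝ) : Prop :=
  ∀ᶠ s in 𝓝[≠] t, g s < g t

/-- A function of one real variable has a strict local minimum at `t`. -/
def IsStrictLocalMin (g : ℝ → ℝ) (t : ℝ) : Prop :=
  ∀ᶠ s in 𝓝[≠] t, g t < g s

/-- `f` has a saddle point at `p`: there are regular paths `γ₁, γ₂` in `D` passing through `p`
and intersecting transversally at `p` (their tangent vectors at `p` are not multiples of each
other) such that `f` has a local maximum at `p` along `γ₁` and a local minimum at `p`
along `γ₂`. -/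
def HasSaddleAt (D : Set (ℝ × ℝ)) (f : ℝ × ℝ → ℝ) (p : ℝ × ℝ) : Prop :=
  ∃ (a₁ b₁ a₂ b₂ t₁ t₂ : ℝ) (γ₁ γ₂ : ℝ → ℝ × ℝ),
    IsRegularPath D γ₁ a₁ b₁ ∧ IsRegularPath D γ₂ a₂ b₂ ∧
    t₁ ∈ Set.Ioo a₁ b₁ ∧ t₂ ∈ Set.Ioo a₂ b₂ ∧ γ₁ t₁ = p ∧ γ₂ t₂ = p ∧
    (∀ c : ℝ, deriv γ₁ t₁ ≠ c • deriv γ₂ t₂) ∧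
    (∀ c : ℝ, deriv γ₂ t₂ ≠ c • deriv γ₁ t₁) ∧
    IsLocalMax (f ∘ γ₁) t₁ ∧ IsLocalMin (f ∘ γ₂) t₂

/-- `f` has a strict saddle point at `p`: as for a saddle point, but with a strict local
maximum along `γ₁` and a strict local minimum along `γ₂`. -/
def HasStrictSaddleAt (D : Set (ℝ × ℝ)) (f : ℝ × ℝ → ℝ) (p : ℝ × ℝ) : Prop :=
  ∃ (a₁ b₁ a₂ b₂ t₁ t₂ : ℝ) (γ₁ γ₂ : ℝ → ℝ × ℝ),
    IsRegularPath D γ₁ a₁ b₁ ∧ IsRegularPath D γ₂ a₂ b₂ ∧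
    t₁ ∈ Set.Ioo a₁ b₁ ∧ t₂ ∈ Set.Ioo a₂ b₂ ∧ γ₁ t₁ = p ∧ γ₂ t₂ = p ∧
    (∀ c : ℝ, deriv γ₁ t₁ ≠ c • deriv γ₂ t₂) ∧
    (∀ c : ℝ, deriv γ₂ t₂ ≠ c • deriv γ₁ t₁) ∧
    IsStrictLocalMax (f ∘ γ₁) t₁ ∧ IsStrictLocalMin (f ∘ γ₂) t₂



/-- Key asymptotic lemma: if `u, v` are differentiable at `t₀`, vanish there, `k < K`,
and eventually `u s ^ k ≤ |v s| ^ K`, then `deriv u t₀ = 0`. -/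
lemma slope_dom {u v : ℝ → ℝ} {t₀ : ℝ} {k K : ℕ} (hk : 0 < k) (hkK : k < K)
    (hu : DifferentiableAt ℝ u t₀) (hv : DifferentiableAt ℝ v t₀)
    (hu0 : u t₀ = 0) (hv0 : v t₀ = 0)
    (hdom : ∀ᶠ s in 𝓝 t₀, u s ^ k ≤ |v s| ^ K) : deriv u t₀ = 0 := by
  by_contra hd
  set d := deriv u t₀ with hdd
  set e := deriv v t₀ with hee
  have hus : Tendsto (slope u t₀) (𝓝[≠] t₀) (𝓝 d) :=
    hasDerivAt_iff_tendsto_slope.1 hu.hasDerivAt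
  have hvs : Tendsto (slope v t₀) (𝓝[≠] t₀) (𝓝 e) :=
    hasDerivAt_iff_tendsto_slope.1 hv.hasDerivAt
  have hvb : ∀ᶠ s in 𝓝[≠] t₀, |v s| ≤ (|e| + 1) * |s - t₀| := by
    have : Tendsto (fun s => |slope v t₀ s|) (𝓝[≠] t₀) (𝓝 |e|) := hvs.abs
    filter_upwards [this.eventually_lt_const (lt_add_one |e|),
      self_mem_nhdsWithin] with s hs hs'
    have hne : s - t₀ ≠ 0 := sub_ne_zero.2 hs'
    have : |v s| = |slope v t₀ s| * |s - t₀| := by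
      rw [slope_def_field, hv0, sub_zero, abs_div]
      field_simp
    rw [this]
    exact mul_le_mul_of_nonneg_right hs.le (abs_nonneg _)
  -- the small factor eventually beats the constant
  have hsmall : ∀ᶠ s in 𝓝[≠] t₀,
      (|e| + 1) ^ K * |s - t₀| ^ (K - k) < (|d| / 2) ^ k := by
    have h0 : Tendsto (fun s : ℝ => (|e| + 1) ^ K * |s - t₀| ^ (K - k)) (𝓝 t₀)
        (𝓝 ((|e| + 1) ^ K * |t₀ - t₀| ^ (K - k))) :=
      ((continuous_const.mul (((continuous_id.sub continuous_const).abs).pow _)).tendsto t₀)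
    have : ((|e| + 1) ^ K * |t₀ - t₀| ^ (K - k)) = 0 := by
      rw [sub_self, abs_zero, zero_pow (by omega), mul_zero]
    rw [this] at h0
    exact (h0.mono_left nhdsWithin_le_nhds).eventually_lt_const
      (by positivity)
  have hub : ∀ᶠ s in 𝓝[≠] t₀, |slope u t₀ s - d| < |d| / 2 := by
    have : Tendsto (fun s => |slope u t₀ s - d|) (𝓝[≠] t₀) (𝓝 |d - d|) :=
      (hus.sub_const d).abs
    rw [sub_self, abs_zero] at this
    exact this.eventually_lt_const (by positivity)
  -- choose the side where u is positive
  have key : ∀ s, s ≠ t₀ → |slope u t₀ s - d| < |d| / 2 →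
      |v s| ≤ (|e| + 1) * |s - t₀| →
      (|e| + 1) ^ K * |s - t₀| ^ (K - k) < (|d| / 2) ^ k →
      u s ^ k ≤ |v s| ^ K →
      (0 < d → t₀ < s → False) ∧ (d < 0 → s < t₀ → False) := by
    intro s hs h1 h2 h3 h4
    have hne : s - t₀ ≠ 0 := sub_ne_zero.2 hs
    have hslope : u s = slope u t₀ s * (s - t₀) := by
      rw [slope_def_field, hu0, sub_zero]; field_simp
    have main : |d| / 2 * |s - t₀| ≤ u s → False := by
      intro hpos
      have h5 : (|d| / 2 * |s - t₀|) ^ k ≤ u s ^ k :=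
        pow_le_pow_left₀ (by positivity) hpos k
      have h6 : |v s| ^ K ≤ ((|e| + 1) * |s - t₀|) ^ K :=
        pow_le_pow_left₀ (abs_nonneg _) h2 K
      have h7 : ((|e| + 1) * |s - t₀|) ^ K
          = ((|e| + 1) ^ K * |s - t₀| ^ (K - k)) * |s - t₀| ^ k := by
        rw [mul_pow, mul_assoc, ← pow_add]
        congr 2; omega
      have h8 : ((|e| + 1) ^ K * |s - t₀| ^ (K - k)) * |s - t₀| ^ k
          < (|d| / 2) ^ k * |s - t₀| ^ k := by
        apply mul_lt_mul_of_pos_right h3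
        exact pow_pos (abs_pos.2 hne) k
      have := (h5.trans h4).trans_lt ((h6.trans_eq h7).trans_lt h8)
      rw [mul_pow] at this
      exact lt_irrefl _ this
    constructor
    · intro hd0 hts
      apply main
      have : d - |d| / 2 ≤ slope u t₀ s := by
        have := abs_lt.1 h1; linarith [this.1]
      have hst : |s - t₀| = s - t₀ := abs_of_pos (by linarith)
      rw [hslope, hst, abs_of_pos hd0]
      have : d / 2 ≤ slope u t₀ s := by rw [abs_of_pos hd0] at this; linarith
      nlinarith [this, sub_pos.2 hts]
    · intro hd0 hts
      apply main
      have h1' := abs_lt.1 h1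
      have : slope u t₀ s ≤ d + |d| / 2 := by linarith [h1'.2]
      have hst : |s - t₀| = -(s - t₀) := abs_of_neg (by linarith)
      rw [hslope, hst, abs_of_neg hd0]
      have hsl : slope u t₀ s ≤ d / 2 := by rw [abs_of_neg hd0] at this; linarith
      nlinarith [hsl, sub_neg.2 hts]
  rcases lt_or_gt_of_ne hd with hd0 | hd0
  · -- d < 0 : use left side
    have : ∀ᶠ s in 𝓝[<] t₀, False := by
      have hsub : 𝓝[<] t₀ ≤ 𝓝[≠] t₀ :=
        nhdsWithin_mono _ fun x hx => ne_of_lt hx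
      filter_upwards [hsub hub, hsub hvb, hsub hsmall,
        hsub (hdom.filter_mono nhdsWithin_le_nhds),
        self_mem_nhdsWithin] with s h1 h2 h3 h4 h5
      exact (key s (ne_of_lt h5) h1 h2 h3 h4).2 hd0 h5
    exact (this.exists).elim fun _ h => h
  · have : ∀ᶠ s in 𝓝[>] t₀, False := by
      have hsub : 𝓝[>] t₀ ≤ 𝓝[≠] t₀ :=
        nhdsWithin_mono _ fun x hx => ne_of_gt hx
      filter_upwards [hsub hub, hsub hvb, hsub hsmall,
        hsub (hdom.filter_mono nhdsWithin_le_nhds),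
        self_mem_nhdsWithin] with s h1 h2 h3 h4 h5
      exact (key s (ne_of_gt h5) h1 h2 h3 h4).1 hd0 h5
    exact (this.exists).elim fun _ h => h

section helpers

variable {x y : ℝ → ℝ} {t : ℝ}

/-- max version -/
lemma deriv_zero_of_max {k K : ℕ} (hk : 0 < k) (hkK : k < K)
    (hx : DifferentiableAt ℝ x t) (hy : DifferentiableAt ℝ y t)
    (hx0 : x t = 0) (hy0 : y t = 0)
    (h : ∀ᶠ s in 𝓝 t, x s ^ k + y s ^ K ≤ 0) : deriv x t = 0 := by
  apply slope_dom hk hkK hx hy hx0 hy0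
  filter_upwards [h] with s hs
  calc x s ^ k ≤ -(y s ^ K) := by linarith
    _ ≤ |y s ^ K| := neg_le_abs _
    _ = |y s| ^ K := abs_pow _ _

/-- min version, `k` odd -/
lemma deriv_zero_of_min {k K : ℕ} (hko : Odd k) (hkK : k < K)
    (hx : DifferentiableAt ℝ x t) (hy : DifferentiableAt ℝ y t)
    (hx0 : x t = 0) (hy0 : y t = 0)
    (h : ∀ᶠ s in 𝓝 t, 0 ≤ x s ^ k + y s ^ K) : deriv x t = 0 := by
  have hneg : deriv (fun s => -x s) t = 0 := by
    apply slope_dom hko.pos hkK hx.neg hy (by simp [hx0]) hy0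
    filter_upwards [h] with s hs
    calc (-x s) ^ k = -(x s ^ k) := hko.neg_pow _
      _ ≤ y s ^ K := by linarith
      _ ≤ |y s ^ K| := le_abs_self _
      _ = |y s| ^ K := abs_pow _ _
  have : deriv (fun s => -x s) t = -deriv x t := deriv.neg
  rw [this] at hneg
  linarith

/-- eventually nonpositive with value zero gives zero derivative -/
lemma deriv_zero_of_nonpos {u : ℝ → ℝ} {t : ℝ} (hu0 : u t = 0)
    (h : ∀ᶠ s in 𝓝 t, u s ≤ 0) : deriv u t = 0 :=
  IsLocalMax.deriv_eq_zero (h.mono fun s hs => by rw [hu0]; exact hs)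

/-- two vectors in the kernel of a nonzero functional are collinear -/
lemma collinear_of_ker {a b : ℝ} (hab : a ≠ 0 ∨ b ≠ 0) {v w : ℝ × ℝ} (hw : w ≠ 0)
    (hv : a * v.1 + b * v.2 = 0) (hw' : a * w.1 + b * w.2 = 0) : ∃ c : ℝ, v = c • w := by
  rcases hab with ha | hb
  · have hw2 : w.2 ≠ 0 := by
      intro h2
      apply hw
      have : a * w.1 = 0 := by rw [h2, mul_zero, add_zero] at hw' ; exact hw'
      have h1 : w.1 = 0 := by
        rcases mul_eq_zero.1 this with h | h
        · exact absurd h ha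
        · exact h
      exact Prod.ext h1 h2
    refine ⟨v.2 / w.2, Prod.ext ?_ ?_⟩
    · show v.1 = v.2 / w.2 * w.1
      have key : a * (v.1 * w.2) = a * (v.2 * w.1) := by
        linear_combination w.2 * hv - v.2 * hw'
      have hkey := mul_left_cancel₀ ha key
      field_simp
      linarith [hkey]
    · show v.2 = v.2 / w.2 * w.2
      field_simp
  · have hw1 : w.1 ≠ 0 := by
      intro h1
      apply hw
      have : b * w.2 = 0 := by rw [h1, mul_zero, zero_add] at hw' ; exact hw'
      have h2 : w.2 = 0 := by
        rcases mul_eq_zero.1 this with h | h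
        · exact absurd h hb
        · exact h
      exact Prod.ext h1 h2
    refine ⟨v.1 / w.1, Prod.ext ?_ ?_⟩
    · show v.1 = v.1 / w.1 * w.1
      field_simp
    · show v.2 = v.1 / w.1 * w.2
      have key : b * (v.2 * w.1) = b * (v.1 * w.2) := by
        linear_combination w.1 * hv - v.1 * hw'
      have hkey := mul_left_cancel₀ hb key
      field_simp
      linarith [hkey]

/-- even-even positivity case: the path is eventually constant. -/
lemma deriv_zero_even_even {m n : ℕ} (hm : m ≠ 0) (hn : n ≠ 0)
    (hem : Even m) (hen : Even n) {γ : ℝ → ℝ × ℝ} {t : ℝ} (hγt : γ t = (0, 0))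
    (h : ∀ᶠ s in 𝓝 t, (γ s).1 ^ m + (γ s).2 ^ n ≤ 0) : deriv γ t = 0 := by
  have hconst : γ =ᶠ[𝓝 t] fun _ => ((0 : ℝ), (0 : ℝ)) := by
    filter_upwards [h] with s hs
    have h1 : 0 ≤ (γ s).1 ^ m := hem.pow_nonneg _
    have h2 : 0 ≤ (γ s).2 ^ n := hen.pow_nonneg _
    have e1 : (γ s).1 ^ m = 0 := le_antisymm (by linarith) h1
    have e2 : (γ s).2 ^ n = 0 := le_antisymm (by linarith) h2
    exact Prod.ext (pow_eq_zero_iff hm |>.1 e1) (pow_eq_zero_iff hn |>.1 e2)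
  rw [hconst.deriv_eq]
  exact deriv_const _ _

/-- components of the derivative of a curve -/
lemma hasDerivAt_fst {γ : ℝ → ℝ × ℝ} {t : ℝ} (h : DifferentiableAt ℝ γ t) :
    HasDerivAt (fun s => (γ s).1) (deriv γ t).1 t := by
  exact h.hasDerivAt.fst

lemma hasDerivAt_snd {γ : ℝ → ℝ × ℝ} {t : ℝ} (h : DifferentiableAt ℝ γ t) :
    HasDerivAt (fun s => (γ s).2) (deriv γ t).2 t := by
  exact h.hasDerivAt.snd

end helpers

/-- For positive integers `m, n`, the function `f(x, y) = x^m + y^n` never has a saddle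
point at the origin. -/
theorem xm_add_yn_no_saddle (m n : ℕ) (hm : 0 < m) (hn : 0 < n) :
    ¬ HasSaddleAt Set.univ (fun q : ℝ × ℝ => q.1 ^ m + q.2 ^ n) (0, 0) := by
  rintro ⟨a₁, b₁, a₂, b₂, t₁, t₂, γ₁, γ₂, hr₁, hr₂, ht₁, ht₂, hp₁, hp₂, hc₁, hc₂, hmax, hmin⟩
  obtain ⟨hdγ₁, hne₁⟩ := hr₁.2.2.2 t₁ ht₁
  obtain ⟨hdγ₂, hne₂⟩ := hr₂.2.2.2 t₂ ht₂
  -- components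
  have hx₁ : HasDerivAt (fun s => (γ₁ s).1) (deriv γ₁ t₁).1 t₁ := hasDerivAt_fst hdγ₁
  have hy₁ : HasDerivAt (fun s => (γ₁ s).2) (deriv γ₁ t₁).2 t₁ := hasDerivAt_snd hdγ₁
  have hx₂ : HasDerivAt (fun s => (γ₂ s).1) (deriv γ₂ t₂).1 t₂ := hasDerivAt_fst hdγ₂
  have hy₂ : HasDerivAt (fun s => (γ₂ s).2) (deriv γ₂ t₂).2 t₂ := hasDerivAt_snd hdγ₂
  have hx₁0 : (γ₁ t₁).1 = 0 := by rw [hp₁]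
  have hy₁0 : (γ₁ t₁).2 = 0 := by rw [hp₁]
  have hx₂0 : (γ₂ t₂).1 = 0 := by rw [hp₂]
  have hy₂0 : (γ₂ t₂).2 = 0 := by rw [hp₂]
  have hval₁ : (γ₁ t₁).1 ^ m + (γ₁ t₁).2 ^ n = 0 := by
    rw [hx₁0, hy₁0, zero_pow hm.ne', zero_pow hn.ne', add_zero]
  have hval₂ : (γ₂ t₂).1 ^ m + (γ₂ t₂).2 ^ n = 0 := by
    rw [hx₂0, hy₂0, zero_pow hm.ne', zero_pow hn.ne', add_zero]
  have hM : ∀ᶠ s in 𝓝 t₁, (γ₁ s).1 ^ m + (γ₁ s).2 ^ n ≤ 0 := by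
    filter_upwards [hmax] with s hs
    simpa [Function.comp, hval₁] using hs
  have hN : ∀ᶠ s in 𝓝 t₂, 0 ≤ (γ₂ s).1 ^ m + (γ₂ s).2 ^ n := by
    filter_upwards [hmin] with s hs
    simpa [Function.comp, hval₂] using hs
  rcases Nat.lt_trichotomy m n with hmn | hmn | hmn
  · -- m < n
    rcases Nat.even_or_odd m with hem | hom
    · rcases Nat.even_or_odd n with hen | hon
      · -- both even: γ₁ eventually constant
        exact hne₁ (deriv_zero_even_even hm.ne' hn.ne' hem hen hp₁ hM)
      · -- m even, n odd : deriv γ₁ t₁ = 0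
        apply hne₁
        have hy0 : (deriv γ₁ t₁).2 = 0 := by
          rw [← hy₁.deriv]
          apply deriv_zero_of_nonpos hy₁0
          filter_upwards [hM] with s hs
          have h1 : 0 ≤ (γ₁ s).1 ^ m := hem.pow_nonneg _
          have : (γ₁ s).2 ^ n ≤ 0 := by linarith
          exact hon.pow_nonpos_iff.1 this
        have hx0 : (deriv γ₁ t₁).1 = 0 := by
          rw [← hx₁.deriv]
          exact deriv_zero_of_max hm hmn hx₁.differentiableAt hy₁.differentiableAt
            hx₁0 hy₁0 hM
        exact Prod.ext hx0 hy0
    · -- m odd (m < n) : both first coordinates of tangents vanish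
      have hv1 : (deriv γ₁ t₁).1 = 0 := by
        rw [← hx₁.deriv]
        exact deriv_zero_of_max hm hmn hx₁.differentiableAt hy₁.differentiableAt hx₁0 hy₁0 hM
      have hw1 : (deriv γ₂ t₂).1 = 0 := by
        rw [← hx₂.deriv]
        exact deriv_zero_of_min hom hmn hx₂.differentiableAt hy₂.differentiableAt hx₂0 hy₂0 hN
      obtain ⟨c, hc⟩ := collinear_of_ker (a := 1) (b := 0) (Or.inl one_ne_zero) hne₂
        (by rw [hv1]; ring) (by rw [hw1]; ring)
      exact hc₁ c hc
  · -- m = n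
    subst hmn
    rcases Nat.even_or_odd m with hem | hom
    · exact hne₁ (deriv_zero_even_even hm.ne' hm.ne' hem hem hp₁ hM)
    · -- m = n odd : x + y has extremum along both paths
      have hsum₁ : (deriv γ₁ t₁).1 + (deriv γ₁ t₁).2 = 0 := by
        have hd : deriv (fun s => (γ₁ s).1 + (γ₁ s).2) t₁
            = (deriv γ₁ t₁).1 + (deriv γ₁ t₁).2 := (hx₁.add hy₁).deriv
        rw [← hd]
        apply deriv_zero_of_nonpos (by rw [hx₁0, hy₁0, add_zero])
        filter_upwards [hM] with s hs
        have h1 : (γ₁ s).1 ^ m ≤ (-(γ₁ s).2) ^ m := by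
          rw [hom.neg_pow]; linarith
        have := (hom.strictMono_pow (R := ℝ)).le_iff_le.1 h1
        linarith
      have hsum₂ : (deriv γ₂ t₂).1 + (deriv γ₂ t₂).2 = 0 := by
        have hd : deriv (fun s => -((γ₂ s).1 + (γ₂ s).2)) t₂
            = -((deriv γ₂ t₂).1 + (deriv γ₂ t₂).2) := ((hx₂.add hy₂).neg).deriv
        have hz : deriv (fun s => -((γ₂ s).1 + (γ₂ s).2)) t₂ = 0 := by
          apply deriv_zero_of_nonpos (by rw [hx₂0, hy₂0]; ring)
          filter_upwards [hN] with s hs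
          have h1 : (-(γ₂ s).1) ^ m ≤ ((γ₂ s).2) ^ m := by
            rw [hom.neg_pow]; linarith
          have := (hom.strictMono_pow (R := ℝ)).le_iff_le.1 h1
          linarith
        rw [hz] at hd
        linarith
      obtain ⟨c, hc⟩ := collinear_of_ker (a := 1) (b := 1)
        (v := deriv γ₁ t₁) (w := deriv γ₂ t₂) (Or.inl one_ne_zero) hne₂
        (by linarith) (by linarith)
      exact hc₁ c hc
  · -- n < m : mirror
    have hM' : ∀ᶠ s in 𝓝 t₁, (γ₁ s).2 ^ n + (γ₁ s).1 ^ m ≤ 0 := by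
      filter_upwards [hM] with s hs; linarith
    have hN' : ∀ᶠ s in 𝓝 t₂, 0 ≤ (γ₂ s).2 ^ n + (γ₂ s).1 ^ m := by
      filter_upwards [hN] with s hs; linarith
    rcases Nat.even_or_odd n with hen | hon
    · rcases Nat.even_or_odd m with hem | hom
      · exact hne₁ (deriv_zero_even_even hm.ne' hn.ne' hem hen hp₁ hM)
      · -- n even, m odd : deriv γ₁ t₁ = 0
        apply hne₁
        have hx0 : (deriv γ₁ t₁).1 = 0 := by
          rw [← hx₁.deriv]
          apply deriv_zero_of_nonpos hx₁0
          filter_upwards [hM] with s hs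
          have h1 : 0 ≤ (γ₁ s).2 ^ n := hen.pow_nonneg _
          have : (γ₁ s).1 ^ m ≤ 0 := by linarith
          exact hom.pow_nonpos_iff.1 this
        have hy0 : (deriv γ₁ t₁).2 = 0 := by
          rw [← hy₁.deriv]
          exact deriv_zero_of_max hn hmn hy₁.differentiableAt hx₁.differentiableAt
            hy₁0 hx₁0 hM'
        exact Prod.ext hx0 hy0
    · -- n odd (n < m) : both second coordinates of tangents vanish
      have hv2 : (deriv γ₁ t₁).2 = 0 := by
        rw [← hy₁.deriv]
        exact deriv_zero_of_max hn hmn hy₁.differentiableAt hx₁.differentiableAt hy₁0 hx₁0 hM'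
      have hw2 : (deriv γ₂ t₂).2 = 0 := by
        rw [← hy₂.deriv]
        exact deriv_zero_of_min hon hmn hy₂.differentiableAt hx₂.differentiableAt hy₂0 hx₂0 hN'
      obtain ⟨c, hc⟩ := collinear_of_ker (a := 0) (b := 1) (Or.inr one_ne_zero) hne₂
        (by rw [hv2]; ring) (by rw [hw2]; ring)
      exact hc₁ c hc
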